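/- Let V be a finite-dimensional real vector space with dual V∨, T > 0, and let α ∈ V, α∨ ∈ V∨ satisfy α∨(α) = 2. For every continuous path π : [0,T] → V with π(0) = 0: (i) E_α π is the unique continuous path η : [0,T] → V with η(0) = 0 satisfying η(T) = s_α( (P_α π)(T) ) and P_α η = P_α π; (ii) E_α π is the unique continuous path η with η(0) = 0 satisfying P_α η = P_α π and η α-codominant; (iii) if π is α-dominant, then E_α π is the unique continuous path η with η(0) = 0 satisfying P_α η = π and η(T) = s_α(π(T)); (iv) E_α π = π if and only if π is α-codominant. -/

import Mathlib

/-- The Pitman transform associated with a pair `(α, α∨)`: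
`P_α π (t) = π t − (inf_{0 ≤ s ≤ t} α∨(π s)) • α`. -/
noncomputable def pitman {V : Type*} [AddCommGroup V] [Module ℝ V]
    (α : V) (αv : Module.Dual ℝ V) (π : ℝ → V) : ℝ → V :=
  fun t => π t - sInf ((fun s => αv (π s)) '' Set.Icc 0 t) • α

/-- The co-Pitman transform `E_α = κ ∘ P_α ∘ κ` on paths on `[0,T]`:
`E_α π (t) = π t − (inf_{t ≤ s ≤ T} α∨(π s)) • α + (inf_{0 ≤ s ≤ T} α∨(π s)) • α`. -/
noncomputable def copitman {V : Type*} [AddCommGroup V] [Module ℝ V]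
    (T : ℝ) (α : V) (αv : Module.Dual ℝ V) (π : ℝ → V) : ℝ → V :=
  fun t => π t - sInf ((fun s => αv (π s)) '' Set.Icc t T) • α
            + sInf ((fun s => αv (π s)) '' Set.Icc 0 T) • α

open Set

section helpers

private lemma bddB {F : ℝ → ℝ} {a b : ℝ} (hF : ContinuousOn F (Icc a b)) :
    BddBelow (F '' Icc a b) :=
  (isCompact_Icc.image_of_continuousOn hF).bddBelow

private lemma exists_min {F : ℝ → ℝ} {a b : ℝ} (hab : a ≤ b) (hF : ContinuousOn F (Icc a b)) :
    ∃ u ∈ Icc a b, F u = sInf (F '' Icc a b) ∧ ∀ s ∈ Icc a b, F u ≤ F s := by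
  obtain ⟨u, hu, hmin⟩ := isCompact_Icc.exists_isMinOn (nonempty_Icc.2 hab) hF
  refine ⟨u, hu, ?_, fun s hs => isMinOn_iff.1 hmin s hs⟩
  refine (IsLeast.csInf_eq ⟨mem_image_of_mem F hu, ?_⟩).symm
  rintro _ ⟨s, hs, rfl⟩
  exact isMinOn_iff.1 hmin s hs


private lemma right_approx {F : ℝ → ℝ} {A : Set ℝ} (hF : ContinuousOn F A) {u v c : ℝ}
    (hu : u ∈ A) (hc : F u < c) (huv : u < v) (hsub : Ioc u v ⊆ A) :
    ∃ s ∈ Ioc u v, F s < c := by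
  have hev : ∀ᶠ s in nhdsWithin u A, F s < c :=
    Filter.Tendsto.eventually_lt_const hc (hF u hu)
  rw [eventually_nhdsWithin_iff] at hev
  have h1 : ∀ᶠ s in nhdsWithin u (Ioi u), s ∈ Ioc u v := Ioc_mem_nhdsGT huv
  have h2 : ∀ᶠ s in nhdsWithin u (Ioi u), s ∈ A → F s < c :=
    hev.filter_mono nhdsWithin_le_nhds
  obtain ⟨s, hs1, hs2⟩ := (h1.and h2).exists
  exact ⟨s, hs1, hs2 (hsub hs1)⟩

private lemma contRight {T : ℝ} {f : ℝ → ℝ} (hf : ContinuousOn f (Icc 0 T)) :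
    ContinuousOn (fun t => sInf (f '' Icc t T)) (Icc 0 T) := by
  rw [Metric.continuousOn_iff]
  intro t ht ε hε
  obtain ⟨δ, hδ, hu⟩ := Metric.uniformContinuousOn_iff.1
    (isCompact_Icc.uniformContinuousOn_of_continuous hf) (ε / 2) (by linarith)
  refine ⟨δ, hδ, fun s hs hdist => ?_⟩
  have key : ∀ a b : ℝ, a ∈ Icc 0 T → b ∈ Icc 0 T → a ≤ b → b - a < δ →
      sInf (f '' Icc a T) ≤ sInf (f '' Icc b T) ∧
      sInf (f '' Icc b T) ≤ sInf (f '' Icc a T) + ε / 2 := by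
    intro a b ha hb hab hd
    have hfa : ContinuousOn f (Icc a T) := hf.mono (Icc_subset_Icc ha.1 le_rfl)
    have hfb : ContinuousOn f (Icc b T) := hf.mono (Icc_subset_Icc hb.1 le_rfl)
    constructor
    · exact csInf_le_csInf (bddB hfa) ((nonempty_Icc.2 hb.2).image f)
        (image_mono (f := f) (Icc_subset_Icc hab le_rfl))
    · obtain ⟨w, hw, hwInf, hwmin⟩ := exists_min ha.2 hfa
      rcases le_total b w with h | h
      · have h1 : sInf (f '' Icc b T) ≤ f w :=
          csInf_le (bddB hfb) (mem_image_of_mem f ⟨h, hw.2⟩)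
        rw [hwInf] at h1; linarith
      · have hwT : w ∈ Icc 0 T := ⟨le_trans ha.1 hw.1, hw.2⟩
        have hd2 : dist b w < δ := by
          rw [Real.dist_eq, abs_lt]
          constructor <;> [linarith [hw.1]; linarith [hw.1]]
        have h2 := hu b hb w hwT hd2
        rw [Real.dist_eq] at h2
        obtain ⟨h2a, h2b⟩ := abs_lt.1 h2
        have h3 : sInf (f '' Icc b T) ≤ f b :=
          csInf_le (bddB hfb) (mem_image_of_mem f ⟨le_rfl, hb.2⟩)
        rw [hwInf] at h2b
        linarith
  rw [Real.dist_eq] at hdist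
  obtain ⟨hda, hdb⟩ := abs_lt.1 hdist
  rw [Real.dist_eq, abs_lt]
  rcases le_total s t with h | h
  · obtain ⟨k1, k2⟩ := key s t hs ht h (by linarith)
    constructor <;> linarith
  · obtain ⟨k1, k2⟩ := key t s ht hs h (by linarith)
    constructor <;> linarith

private lemma contLeft {T : ℝ} {f : ℝ → ℝ} (hf : ContinuousOn f (Icc 0 T)) :
    ContinuousOn (fun t => sInf (f '' Icc 0 t)) (Icc 0 T) := by
  rw [Metric.continuousOn_iff]
  intro t ht ε hε
  obtain ⟨δ, hδ, hu⟩ := Metric.uniformContinuousOn_iff.1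
    (isCompact_Icc.uniformContinuousOn_of_continuous hf) (ε / 2) (by linarith)
  refine ⟨δ, hδ, fun s hs hdist => ?_⟩
  have key : ∀ a b : ℝ, a ∈ Icc 0 T → b ∈ Icc 0 T → a ≤ b → b - a < δ →
      sInf (f '' Icc 0 b) ≤ sInf (f '' Icc 0 a) ∧
      sInf (f '' Icc 0 a) ≤ sInf (f '' Icc 0 b) + ε / 2 := by
    intro a b ha hb hab hd
    have hfa : ContinuousOn f (Icc 0 a) := hf.mono (Icc_subset_Icc le_rfl ha.2)
    have hfb : ContinuousOn f (Icc 0 b) := hf.mono (Icc_subset_Icc le_rfl hb.2)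
    constructor
    · exact csInf_le_csInf (bddB hfb) ((nonempty_Icc.2 ha.1).image f)
        (image_mono (f := f) (Icc_subset_Icc le_rfl hab))
    · obtain ⟨w, hw, hwInf, hwmin⟩ := exists_min hb.1 hfb
      rcases le_total w a with h | h
      · have h1 : sInf (f '' Icc 0 a) ≤ f w :=
          csInf_le (bddB hfa) (mem_image_of_mem f ⟨hw.1, h⟩)
        rw [hwInf] at h1; linarith
      · have hwT : w ∈ Icc 0 T := ⟨hw.1, le_trans hw.2 hb.2⟩
        have hd2 : dist a w < δ := by
          rw [Real.dist_eq, abs_lt]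
          constructor <;> [linarith [hw.2]; linarith [hw.2]]
        have h2 := hu a ha w hwT hd2
        rw [Real.dist_eq] at h2
        obtain ⟨h2a, h2b⟩ := abs_lt.1 h2
        have h3 : sInf (f '' Icc 0 a) ≤ f a :=
          csInf_le (bddB hfa) (mem_image_of_mem f ⟨ha.1, le_rfl⟩)
        rw [hwInf] at h2b
        linarith
  rw [Real.dist_eq] at hdist
  obtain ⟨hda, hdb⟩ := abs_lt.1 hdist
  rw [Real.dist_eq, abs_lt]
  rcases le_total s t with h | h
  · obtain ⟨k1, k2⟩ := key s t hs ht h (by linarith)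
    constructor <;> linarith
  · obtain ⟨k1, k2⟩ := key t s ht hs h (by linarith)
    constructor <;> linarith


private lemma lemK {T t : ℝ} {f : ℝ → ℝ} (hf : ContinuousOn f (Icc 0 T)) (ht : t ∈ Icc 0 T) :
    sInf ((fun s => f s - 2 * sInf (f '' Icc s T) + 2 * sInf (f '' Icc 0 T)) '' Icc 0 t)
      = sInf (f '' Icc 0 t) + sInf (f '' Icc 0 T) - sInf (f '' Icc t T) := by
  obtain ⟨ht0, htT⟩ := ht
  set m := sInf (f '' Icc 0 t) with hm
  set Mt := sInf (f '' Icc t T) with hMtd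
  set c := sInf (f '' Icc 0 T) with hcd
  set θ := max m Mt with hθ
  have hft : ContinuousOn f (Icc 0 t) := hf.mono (Icc_subset_Icc le_rfl htT)
  have hftT : ContinuousOn f (Icc t T) := hf.mono (Icc_subset_Icc ht0 le_rfl)
  have hm_le : ∀ s ∈ Icc 0 t, m ≤ f s := fun s hs =>
    csInf_le (bddB hft) (mem_image_of_mem f hs)
  have hMs_le_f : ∀ s ∈ Icc 0 t, sInf (f '' Icc s T) ≤ f s := fun s hs =>
    csInf_le (bddB (hf.mono (Icc_subset_Icc hs.1 le_rfl)))
      (mem_image_of_mem f ⟨le_rfl, le_trans hs.2 htT⟩)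
  have hMs_le_Mt : ∀ s ∈ Icc 0 t, sInf (f '' Icc s T) ≤ Mt := fun s hs =>
    csInf_le_csInf (bddB (hf.mono (Icc_subset_Icc hs.1 le_rfl)))
      ((nonempty_Icc.2 htT).image f) (image_mono (f := f) (Icc_subset_Icc hs.2 le_rfl))
  have hc_le_m : c ≤ m := csInf_le_csInf (bddB hf) ((nonempty_Icc.2 ht0).image f)
    (image_mono (f := f) (Icc_subset_Icc le_rfl htT))
  have hc_le_Mt : c ≤ Mt := csInf_le_csInf (bddB hf) ((nonempty_Icc.2 htT).image f)
    (image_mono (f := f) (Icc_subset_Icc ht0 le_rfl))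
  have hsum : m + Mt = θ + c := by
    obtain ⟨u, hu, huInf, humin⟩ := exists_min (le_trans ht0 htT) hf
    rcases le_total u t with h | h
    · have h1 : m ≤ c := by rw [hcd, ← huInf]; exact hm_le u ⟨hu.1, h⟩
      have h3 : θ = Mt := max_eq_right (by linarith)
      linarith
    · have h1 : Mt ≤ c := by
        rw [hcd, ← huInf]
        exact csInf_le (bddB hftT) (mem_image_of_mem f ⟨h, hu.2⟩)
      have h3 : θ = m := max_eq_left (by linarith)
      linarith
  have hlb : ∀ y ∈ (fun s => f s - 2 * sInf (f '' Icc s T) + 2 * c) '' Icc 0 t,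
      m + c - Mt ≤ y := by
    rintro y ⟨s, hs, rfl⟩
    show m + c - Mt ≤ f s - 2 * sInf (f '' Icc s T) + 2 * c
    have h1 := hm_le s hs
    have h2 := hMs_le_f s hs
    have h3 := hMs_le_Mt s hs
    rcases le_total m Mt with h | h
    · have hθ' : θ = Mt := max_eq_right h
      linarith
    · have hθ' : θ = m := max_eq_left h
      linarith
  refine le_antisymm ?_ (le_csInf ((nonempty_Icc.2 ht0).image _) hlb)
  obtain ⟨u₀, hu₀, hu₀Inf, _⟩ := exists_min ht0 hft
  set S : Set ℝ := Icc 0 t ∩ f ⁻¹' Iic θ with hS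
  have hSne : S.Nonempty := ⟨u₀, hu₀, by
    simp only [mem_preimage, mem_Iic]
    rw [hu₀Inf, ← hm]
    exact le_max_left _ _⟩
  have hScl : IsClosed S := hft.preimage_isClosed_of_isClosed isClosed_Icc isClosed_Iic
  have hSbd : BddAbove S := ⟨t, fun x hx => hx.1.2⟩
  set q := sSup S with hq
  have hqS : q ∈ S := hScl.csSup_mem hSne hSbd
  obtain ⟨hqIcc, hqle'⟩ := hqS
  have hqle : f q ≤ θ := hqle'
  have hgt : ∀ s, q < s → s ≤ t → θ < f s := by
    intro s h1 h2
    by_contra hle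
    exact absurd (le_csSup hSbd ⟨⟨le_trans hqIcc.1 h1.le, h2⟩, le_of_not_gt hle⟩)
      (not_le.2 h1)
  have hfq : f q = θ := by
    refine le_antisymm hqle (not_lt.1 fun hlt => ?_)
    rcases eq_or_lt_of_le hqIcc.2 with h | h
    · have h1 : m ≤ f q := hm_le q hqIcc
      have h2 : Mt ≤ f q := by
        rw [h]
        exact csInf_le (bddB hftT) (mem_image_of_mem f ⟨le_rfl, htT⟩)
      exact absurd (max_le h1 h2) (not_le.2 hlt)
    · obtain ⟨s, hs, hfs⟩ := right_approx hf ⟨hqIcc.1, le_trans hqIcc.2 htT⟩ hlt h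
        (fun x hx => ⟨le_trans hqIcc.1 hx.1.le, le_trans hx.2 htT⟩)
      exact absurd hfs (not_lt.2 (hgt s hs.1 hs.2).le)
  have hMq : sInf (f '' Icc q T) = Mt := by
    refine le_antisymm (hMs_le_Mt q hqIcc)
      (le_csInf ((nonempty_Icc.2 (le_trans hqIcc.2 htT)).image f) ?_)
    rintro _ ⟨v, hv, rfl⟩
    rcases le_total t v with h | h
    · exact csInf_le (bddB hftT) (mem_image_of_mem f ⟨h, hv.2⟩)
    · rcases eq_or_lt_of_le hv.1 with h2 | h2
      · rw [← h2, hfq]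
        exact le_max_right _ _
      · exact le_trans (le_max_right _ _) (hgt v h2 h).le
  refine csInf_le ⟨m + c - Mt, hlb⟩ ⟨q, hqIcc, ?_⟩
  show f q - 2 * sInf (f '' Icc q T) + 2 * c = m + c - Mt
  rw [hMq, hfq]
  linarith

private lemma lemU {T : ℝ} (hT0 : 0 ≤ T) {l r : ℝ → ℝ}
    (hl : ContinuousOn l (Icc 0 T)) (hr : ContinuousOn r (Icc 0 T))
    (hfix : ∀ t ∈ Icc 0 T, r t = sInf ((fun s => l s + 2 * r s) '' Icc 0 t)) :
    ∀ t ∈ Icc 0 T, r t = max (r T) (-sInf (l '' Icc t T)) := by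
  set F : ℝ → ℝ := fun s => l s + 2 * r s with hF
  have hFc : ContinuousOn F (Icc 0 T) := hl.add (continuousOn_const.mul hr)
  have hmono : ∀ a ∈ Icc 0 T, ∀ b ∈ Icc 0 T, a ≤ b → r b ≤ r a := by
    intro a ha b hb hab
    rw [hfix a ha, hfix b hb]
    exact csInf_le_csInf (bddB (hFc.mono (Icc_subset_Icc le_rfl hb.2)))
      ((nonempty_Icc.2 ha.1).image F) (image_mono (f := F) (Icc_subset_Icc le_rfl hab))
  have hrl : ∀ s ∈ Icc 0 T, -l s ≤ r s := by
    intro s hs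
    have h1 : r s ≤ F s := by
      rw [hfix s hs]
      exact csInf_le (bddB (hFc.mono (Icc_subset_Icc le_rfl hs.2)))
        (mem_image_of_mem F ⟨hs.1, le_rfl⟩)
    have h1' : r s ≤ l s + 2 * r s := h1
    linarith
  intro t ht
  have hT' : T ∈ Icc (0:ℝ) T := right_mem_Icc.2 hT0
  have hlbd : BddBelow (l '' Icc t T) := bddB (hl.mono (Icc_subset_Icc ht.1 le_rfl))
  have hlne : (l '' Icc t T).Nonempty := (nonempty_Icc.2 ht.2).image l
  refine le_antisymm ?_ (max_le (hmono t ht T hT' ht.2) ?_)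
  swap
  · rw [neg_le]
    refine le_csInf hlne ?_
    rintro _ ⟨s, hs, rfl⟩
    have hsT : s ∈ Icc 0 T := ⟨le_trans ht.1 hs.1, hs.2⟩
    have h1 := hrl s hsT
    have h2 := hmono t ht s hsT hs.1
    linarith
  by_contra hgt
  push_neg at hgt
  obtain ⟨hgt1, hgt2⟩ := max_lt_iff.1 hgt
  set S : Set ℝ := Icc t T ∩ r ⁻¹' Ici (r t) with hS
  have hScl : IsClosed S :=
    (hr.mono (Icc_subset_Icc ht.1 le_rfl)).preimage_isClosed_of_isClosed
      isClosed_Icc isClosed_Ici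
  have hSne : S.Nonempty := ⟨t, ⟨le_rfl, ht.2⟩, mem_preimage.2 (mem_Ici.2 le_rfl)⟩
  have hSbd : BddAbove S := ⟨T, fun x hx => hx.1.2⟩
  have huS := hScl.csSup_mem hSne hSbd
  set u := sSup S with hu
  obtain ⟨huI, hur'⟩ := huS
  have hur : r t ≤ r u := hur'
  have huT : u ∈ Icc 0 T := ⟨le_trans ht.1 huI.1, huI.2⟩
  have hru : r u = r t := le_antisymm (hmono t ht u huT huI.1) hur
  have huT' : u < T := by
    rcases eq_or_lt_of_le huI.2 with h | h
    · rw [h] at hru; linarith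
    · exact h
  set ε := (sInf (l '' Icc t T) + r t) / 2 with hε
  have hεpos : 0 < ε := by rw [hε]; linarith
  obtain ⟨s, hsIoc, hsval⟩ := right_approx (F := fun x => -r x) hr.neg huT
    (c := -(r t) + ε) (by show -r u < -(r t) + ε; rw [hru]; linarith) huT'
    (fun x hx => ⟨le_trans huT.1 hx.1.le, hx.2⟩)
  have hsT : s ∈ Icc 0 T := ⟨le_trans huT.1 hsIoc.1.le, hsIoc.2⟩
  have hst : s ∈ Icc t T := ⟨le_trans huI.1 hsIoc.1.le, hsIoc.2⟩
  have hrs_lt : r s < r t := by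
    by_contra hle
    exact absurd (le_csSup hSbd ⟨hst, not_lt.1 hle⟩) (not_le.2 hsIoc.1)
  have hrs_gt : r t - ε < r s := by
    have : -r s < -(r t) + ε := hsval
    linarith
  obtain ⟨v, hv, hvInf, hvmin⟩ := exists_min hsT.1 (hFc.mono (Icc_subset_Icc le_rfl hsT.2))
  have hrsF : r s = F v := by rw [hfix s hsT, ← hvInf]
  have hvu : u < v := by
    by_contra hle
    push_neg at hle
    have h1 : r u ≤ F v := by
      rw [hfix u huT]
      exact csInf_le (bddB (hFc.mono (Icc_subset_Icc le_rfl huT.2)))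
        (mem_image_of_mem F ⟨hv.1, hle⟩)
    have h2 : r u ≤ r s := by rw [hrsF]; exact h1
    linarith
  have hvs : v ∈ Icc t T := ⟨le_trans huI.1 hvu.le, le_trans hv.2 hsT.2⟩
  have hvT : v ∈ Icc 0 T := ⟨le_trans ht.1 hvs.1, hvs.2⟩
  have h3 : r v ≤ r t := by rw [← hru]; exact hmono u huT v hvT hvu.le
  have h4 : r s ≤ r v := hmono v hvT s hsT hv.2
  have h5 : l v ≤ -(r s) := by
    have h : r s = l v + 2 * r v := hrsF
    linarith
  have h6 : sInf (l '' Icc t T) ≤ l v := csInf_le hlbd (mem_image_of_mem l hvs)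
  rw [hε] at hεpos
  linarith


end helpers

section vect
variable {V : Type*} [NormedAddCommGroup V] [NormedSpace ℝ V] [FiniteDimensional ℝ V]
variable {T : ℝ} {α : V} {αv : Module.Dual ℝ V} {π : ℝ → V}

private lemma copit_cont (hT0 : 0 ≤ T) (hcont : ContinuousOn π (Icc 0 T)) :
    ContinuousOn (copitman T α αv π) (Icc 0 T) := by
  have hαv : Continuous αv := αv.continuous_of_finiteDimensional
  have hfc : ContinuousOn (fun s => αv (π s)) (Icc 0 T) := hαv.comp_continuousOn hcont
  show ContinuousOn (fun t => π t - sInf ((fun s => αv (π s)) '' Icc t T) • α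
      + sInf ((fun s => αv (π s)) '' Icc 0 T) • α) (Icc 0 T)
  exact (hcont.sub ((contRight hfc).smul continuousOn_const)).add continuousOn_const

private lemma copit_zero (h0 : π 0 = 0) : copitman T α αv π 0 = 0 := by
  have h : ∀ x : ℝ, π 0 - x • α + x • α = 0 := by intro x; rw [h0]; abel
  exact h _

private lemma copit_end (hpair : αv α = 2) :
    copitman T α αv π T = pitman α αv π T - αv (pitman α αv π T) • α := by
  have h1 : sInf ((fun s => αv (π s)) '' Icc T T) = αv (π T) := by
    rw [Icc_self, image_singleton, csInf_singleton]
  have h2 : αv (pitman α αv π T) = αv (π T) - 2 * sInf ((fun s => αv (π s)) '' Icc 0 T) := by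
    simp only [pitman, map_sub, map_smul, smul_eq_mul, hpair]; ring
  show π T - sInf ((fun s => αv (π s)) '' Icc T T) • α
      + sInf ((fun s => αv (π s)) '' Icc 0 T) • α
      = (π T - sInf ((fun s => αv (π s)) '' Icc 0 T) • α) - αv (pitman α αv π T) • α
  rw [h1, h2]
  module

private lemma copit_pitman (hpair : αv α = 2) (hcont : ContinuousOn π (Icc 0 T)) :
    ∀ t ∈ Icc 0 T, pitman α αv (copitman T α αv π) t = pitman α αv π t := by
  intro t ht
  have hαv : Continuous αv := αv.continuous_of_finiteDimensional
  have hfc : ContinuousOn (fun s => αv (π s)) (Icc 0 T) := hαv.comp_continuousOn hcont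
  have hfun : (fun s => αv (copitman T α αv π s))
      = fun s => αv (π s) - 2 * sInf ((fun u => αv (π u)) '' Icc s T)
          + 2 * sInf ((fun u => αv (π u)) '' Icc 0 T) := by
    funext s
    simp only [copitman, map_add, map_sub, map_smul, smul_eq_mul, hpair]
    ring
  have keq : sInf ((fun s => αv (π s) - 2 * sInf ((fun u => αv (π u)) '' Icc s T)
        + 2 * sInf ((fun u => αv (π u)) '' Icc 0 T)) '' Icc 0 t)
      = sInf ((fun u => αv (π u)) '' Icc 0 t) + sInf ((fun u => αv (π u)) '' Icc 0 T)
        - sInf ((fun u => αv (π u)) '' Icc t T) := lemK hfc ht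
  show copitman T α αv π t - sInf ((fun s => αv (copitman T α αv π s)) '' Icc 0 t) • α
      = π t - sInf ((fun s => αv (π s)) '' Icc 0 t) • α
  rw [hfun, keq]
  show (π t - sInf ((fun s => αv (π s)) '' Icc t T) • α
      + sInf ((fun s => αv (π s)) '' Icc 0 T) • α)
      - (sInf ((fun u => αv (π u)) '' Icc 0 t) + sInf ((fun u => αv (π u)) '' Icc 0 T)
        - sInf ((fun u => αv (π u)) '' Icc t T)) • α
      = π t - sInf ((fun s => αv (π s)) '' Icc 0 t) • α
  module

private lemma copit_codom (hpair : αv α = 2) (hcont : ContinuousOn π (Icc 0 T)) :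
    ∀ t ∈ Icc 0 T, αv (copitman T α αv π T) ≤ αv (copitman T α αv π t) := by
  intro t ht
  have hαv : Continuous αv := αv.continuous_of_finiteDimensional
  have hfc : ContinuousOn (fun s => αv (π s)) (Icc 0 T) := hαv.comp_continuousOn hcont
  have hval : ∀ s : ℝ, αv (copitman T α αv π s)
      = αv (π s) - 2 * sInf ((fun u => αv (π u)) '' Icc s T)
        + 2 * sInf ((fun u => αv (π u)) '' Icc 0 T) := by
    intro s
    simp only [copitman, map_add, map_sub, map_smul, smul_eq_mul, hpair]
    ring
  rw [hval, hval]
  have h1 : sInf ((fun u => αv (π u)) '' Icc T T) = αv (π T) := by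
    rw [Icc_self, image_singleton, csInf_singleton]
  rw [h1]
  have h2 : sInf ((fun u => αv (π u)) '' Icc t T) ≤ αv (π t) :=
    csInf_le (bddB (hfc.mono (Icc_subset_Icc ht.1 le_rfl)))
      (mem_image_of_mem _ ⟨le_rfl, ht.2⟩)
  have h3 : sInf ((fun u => αv (π u)) '' Icc t T) ≤ αv (π T) :=
    csInf_le (bddB (hfc.mono (Icc_subset_Icc ht.1 le_rfl)))
      (mem_image_of_mem _ ⟨ht.2, le_rfl⟩)
  linarith

private lemma lemUV (hT0 : 0 ≤ T) (hpair : αv α = 2)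
    (hcont : ContinuousOn π (Icc 0 T))
    {η₁ η₂ : ℝ → V} (h1c : ContinuousOn η₁ (Icc 0 T)) (h2c : ContinuousOn η₂ (Icc 0 T))
    (hp1 : ∀ t ∈ Icc 0 T, pitman α αv η₁ t = pitman α αv π t)
    (hp2 : ∀ t ∈ Icc 0 T, pitman α αv η₂ t = pitman α αv π t)
    (hend : η₁ T = η₂ T) :
    ∀ t ∈ Icc 0 T, η₁ t = η₂ t := by
  have hαv : Continuous αv := αv.continuous_of_finiteDimensional
  set l : ℝ → ℝ := fun s => αv (pitman α αv π s) with hl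
  have hlc : ContinuousOn l (Icc 0 T) := by
    apply hαv.comp_continuousOn
    show ContinuousOn (fun t => π t - sInf ((fun s => αv (π s)) '' Icc 0 t) • α) (Icc 0 T)
    exact hcont.sub ((contLeft (hαv.comp_continuousOn hcont)).smul continuousOn_const)
  have key : ∀ η : ℝ → V, ContinuousOn η (Icc 0 T) →
      (∀ t ∈ Icc 0 T, pitman α αv η t = pitman α αv π t) →
      ∀ t ∈ Icc 0 T, η t = pitman α αv π t +
        max ((αv (η T) - l T) / 2) (-sInf (l '' Icc t T)) • α := by
    intro η hc hp
    set r : ℝ → ℝ := fun u => sInf ((fun s => αv (η s)) '' Icc 0 u) with hrdef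
    have hrc : ContinuousOn r (Icc 0 T) := contLeft (hαv.comp_continuousOn hc)
    have hηr : ∀ t ∈ Icc 0 T, η t = pitman α αv π t + r t • α := by
      intro t ht
      rw [← hp t ht]
      show η t = (η t - sInf ((fun s => αv (η s)) '' Icc 0 t) • α)
          + sInf ((fun s => αv (η s)) '' Icc 0 t) • α
      abel
    have hfix : ∀ t ∈ Icc 0 T, r t = sInf ((fun s => l s + 2 * r s) '' Icc 0 t) := by
      intro t ht
      show sInf ((fun s => αv (η s)) '' Icc 0 t) = _
      congr 1
      apply image_congr
      intro s hs
      have hsT : s ∈ Icc 0 T := ⟨hs.1, le_trans hs.2 ht.2⟩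
      rw [hηr s hsT]
      simp only [map_add, map_smul, smul_eq_mul, hpair, hl]
      ring
    have hrU := lemU hT0 hlc hrc hfix
    have hT' : T ∈ Icc (0:ℝ) T := right_mem_Icc.2 hT0
    have hrT : (αv (η T) - l T) / 2 = r T := by
      have h := congrArg αv (hηr T hT')
      simp only [map_add, map_smul, smul_eq_mul, hpair] at h
      have hlT : l T = αv (pitman α αv π T) := rfl
      linarith
    intro t ht
    rw [hrT, ← hrU t ht]
    exact hηr t ht
  intro t ht
  rw [key η₁ h1c hp1 t ht, key η₂ h2c hp2 t ht, hend]



private lemma lemEndT (hT0 : 0 ≤ T) (hpair : αv α = 2)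
    {η : ℝ → V}
    (hp : ∀ t ∈ Icc 0 T, pitman α αv η t = pitman α αv π t)
    (hcod : ∀ t ∈ Icc 0 T, αv (η T) ≤ αv (η t)) :
    η T = pitman α αv π T - αv (pitman α αv π T) • α := by
  have hT' : T ∈ Icc (0:ℝ) T := right_mem_Icc.2 hT0
  have hrT : sInf ((fun s => αv (η s)) '' Icc 0 T) = αv (η T) :=
    IsLeast.csInf_eq ⟨⟨T, hT', rfl⟩, by rintro _ ⟨s, hs, rfl⟩; exact hcod s hs⟩
  have h' : η T - αv (η T) • α = π T - sInf ((fun s => αv (π s)) '' Icc 0 T) • α := by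
    rw [← hrT]
    exact hp T hT'
  have hv := congrArg αv h'
  simp only [map_sub, map_smul, smul_eq_mul, hpair] at hv
  have hηT : η T = π T - sInf ((fun s => αv (π s)) '' Icc 0 T) • α + αv (η T) • α := by
    rw [← h']; abel
  have h2 : αv (pitman α αv π T) = αv (π T) - 2 * sInf ((fun s => αv (π s)) '' Icc 0 T) := by
    simp only [pitman, map_sub, map_smul, smul_eq_mul, hpair]; ring
  have ha : αv (η T) = 2 * sInf ((fun s => αv (π s)) '' Icc 0 T) - αv (π T) := by linarith
  rw [hηT, ha, h2]
  show π T - sInf ((fun s => αv (π s)) '' Icc 0 T) • α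
      + (2 * sInf ((fun s => αv (π s)) '' Icc 0 T) - αv (π T)) • α
      = (π T - sInf ((fun s => αv (π s)) '' Icc 0 T) • α)
        - (αv (π T) - 2 * sInf ((fun s => αv (π s)) '' Icc 0 T)) • α
  module

private lemma uniq1 (hT0 : 0 ≤ T) (hpair : αv α = 2) (hcont : ContinuousOn π (Icc 0 T))
    {η : ℝ → V} (hηc : ContinuousOn η (Icc 0 T))
    (hηT : η T = pitman α αv π T - αv (pitman α αv π T) • α)
    (hηp : ∀ t ∈ Icc 0 T, pitman α αv η t = pitman α αv π t) :
    ∀ t ∈ Icc 0 T, η t = copitman T α αv π t :=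
  lemUV hT0 hpair hcont hηc (copit_cont hT0 hcont) hηp (copit_pitman hpair hcont)
    (by rw [hηT, copit_end hpair])

end vect

/-- Lemma 4.1 of Biane–Bougerol–O'Connell, characterizations of `E_α π`:
(i) it is the unique path `η` with `η(T) = s_α((P_α π)(T))` and `P_α η = P_α π`;
(ii) it is the unique `α`-codominant path `η` with `P_α η = P_α π`;
(iii) if `π` is `α`-dominant, it is the unique path `η` with `P_α η = π` and
`η(T) = s_α(π(T))`; (iv) `E_α π = π` iff `π` is `α`-codominant.
Here `s_α v = v − α∨(v) α`; a path `η` is `α`-dominant if `α∨(η t) ≥ 0` on `[0,T]`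
and `α`-codominant if `α∨(η t) ≥ α∨(η T)` on `[0,T]`. -/
theorem copitman_characterizations
    {V : Type*} [NormedAddCommGroup V] [NormedSpace ℝ V] [FiniteDimensional ℝ V]
    (T : ℝ) (hT : 0 < T) (α : V) (αv : Module.Dual ℝ V) (hpair : αv α = 2)
    (π : ℝ → V) (hcont : ContinuousOn π (Set.Icc 0 T)) (h0 : π 0 = 0) :
    -- `E_α π` is itself a path with the stated properties
    (ContinuousOn (copitman T α αv π) (Set.Icc 0 T) ∧
      copitman T α αv π 0 = 0 ∧
      copitman T α αv π T
        = pitman α αv π T - αv (pitman α αv π T) • α ∧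
      (∀ t ∈ Set.Icc 0 T,
        pitman α αv (copitman T α αv π) t = pitman α αv π t) ∧
      (∀ t ∈ Set.Icc 0 T,
        αv (copitman T α αv π T) ≤ αv (copitman T α αv π t))) ∧
    -- (i) uniqueness given the endpoint `s_α((P_α π)(T))`
    (∀ η : ℝ → V, ContinuousOn η (Set.Icc 0 T) → η 0 = 0 →
      η T = pitman α αv π T - αv (pitman α αv π T) • α →
      (∀ t ∈ Set.Icc 0 T, pitman α αv η t = pitman α αv π t) →
      ∀ t ∈ Set.Icc 0 T, η t = copitman T α αv π t) ∧
    -- (ii) uniqueness given `α`-codominance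
    (∀ η : ℝ → V, ContinuousOn η (Set.Icc 0 T) → η 0 = 0 →
      (∀ t ∈ Set.Icc 0 T, pitman α αv η t = pitman α αv π t) →
      (∀ t ∈ Set.Icc 0 T, αv (η T) ≤ αv (η t)) →
      ∀ t ∈ Set.Icc 0 T, η t = copitman T α αv π t) ∧
    -- (iii) for an `α`-dominant path `π`
    ((∀ t ∈ Set.Icc 0 T, 0 ≤ αv (π t)) →
      (∀ t ∈ Set.Icc 0 T, pitman α αv (copitman T α αv π) t = π t) ∧
      copitman T α αv π T = π T - αv (π T) • α ∧
      (∀ η : ℝ → V, ContinuousOn η (Set.Icc 0 T) → η 0 = 0 →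
        (∀ t ∈ Set.Icc 0 T, pitman α αv η t = π t) →
        η T = π T - αv (π T) • α →
        ∀ t ∈ Set.Icc 0 T, η t = copitman T α αv π t)) ∧
    -- (iv) fixed points of `E_α` are exactly the `α`-codominant paths
    ((∀ t ∈ Set.Icc 0 T, copitman T α αv π t = π t) ↔
      ∀ t ∈ Set.Icc 0 T, αv (π T) ≤ αv (π t)) := by
  have hT0 : (0:ℝ) ≤ T := hT.le
  have hT' : T ∈ Set.Icc (0:ℝ) T := Set.right_mem_Icc.2 hT0
  have hαv : Continuous αv := αv.continuous_of_finiteDimensional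
  have hfc : ContinuousOn (fun s => αv (π s)) (Set.Icc 0 T) := hαv.comp_continuousOn hcont
  refine ⟨⟨copit_cont hT0 hcont, copit_zero h0, copit_end hpair, copit_pitman hpair hcont,
      copit_codom hpair hcont⟩, ?_, ?_, ?_, ?_⟩
  · intro η hηc hη0 hηT hηp
    exact uniq1 hT0 hpair hcont hηc hηT hηp
  · intro η hηc hη0 hηp hcod
    exact uniq1 hT0 hpair hcont hηc (lemEndT hT0 hpair hηp hcod) hηp
  · intro hdom
    have hm0 : ∀ t ∈ Set.Icc (0:ℝ) T, sInf ((fun s => αv (π s)) '' Set.Icc 0 t) = 0 := by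
      intro t ht
      refine le_antisymm (csInf_le (bddB (hfc.mono (Set.Icc_subset_Icc le_rfl ht.2)))
        ⟨0, Set.left_mem_Icc.2 ht.1, by simp [h0]⟩)
        (le_csInf ((Set.nonempty_Icc.2 ht.1).image _) ?_)
      rintro _ ⟨s, hs, rfl⟩
      exact hdom s ⟨hs.1, le_trans hs.2 ht.2⟩
    have hpid : ∀ t ∈ Set.Icc (0:ℝ) T, pitman α αv π t = π t := by
      intro t ht
      show π t - sInf ((fun s => αv (π s)) '' Set.Icc 0 t) • α = π t
      rw [hm0 t ht, zero_smul, sub_zero]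
    refine ⟨fun t ht => (copit_pitman hpair hcont t ht).trans (hpid t ht), ?_, ?_⟩
    · rw [copit_end hpair, hpid T hT']
    · intro η hηc hη0 hηp hηT t ht
      refine uniq1 hT0 hpair hcont hηc ?_ (fun u hu => (hηp u hu).trans (hpid u hu).symm) t ht
      rw [hpid T hT']
      exact hηT
  · constructor
    · intro h t ht
      have hMc : ∀ u ∈ Set.Icc (0:ℝ) T, sInf ((fun s => αv (π s)) '' Set.Icc u T)
          = sInf ((fun s => αv (π s)) '' Set.Icc 0 T) := by
        intro u hu
        have hc := congrArg αv (h u hu)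
        simp only [copitman, map_add, map_sub, map_smul, smul_eq_mul, hpair] at hc
        linarith
      have hMT : sInf ((fun s => αv (π s)) '' Set.Icc T T) = αv (π T) := by
        rw [Set.Icc_self, Set.image_singleton, csInf_singleton]
      have h1 : αv (π T) = sInf ((fun s => αv (π s)) '' Set.Icc 0 T) := by
        rw [← hMT, hMc T hT']
      have h2 : sInf ((fun s => αv (π s)) '' Set.Icc t T) ≤ αv (π t) :=
        csInf_le (bddB (hfc.mono (Set.Icc_subset_Icc ht.1 le_rfl)))
          (Set.mem_image_of_mem _ ⟨le_rfl, ht.2⟩)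
      rw [h1, ← hMc t ht]
      exact h2
    · intro hcod t ht
      have hMt : ∀ u ∈ Set.Icc (0:ℝ) T,
          sInf ((fun s => αv (π s)) '' Set.Icc u T) = αv (π T) := by
        intro u hu
        refine le_antisymm (csInf_le (bddB (hfc.mono (Set.Icc_subset_Icc hu.1 le_rfl)))
          ⟨T, ⟨hu.2, le_rfl⟩, rfl⟩) (le_csInf ((Set.nonempty_Icc.2 hu.2).image _) ?_)
        rintro _ ⟨s, hs, rfl⟩
        exact hcod s ⟨le_trans hu.1 hs.1, hs.2⟩
      show π t - sInf ((fun s => αv (π s)) '' Set.Icc t T) • α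
          + sInf ((fun s => αv (π s)) '' Set.Icc 0 T) • α = π t
      rw [hMt t ht, hMt 0 (Set.left_mem_Icc.2 hT0)]
      abel
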